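/- Let Z = Z(a) ⊆ N_ℝ be the zonotope of a primitive spanning configuration a ∈ N^E, and suppose Z is a parallelotope (a is a basis of N_ℝ with each a_e primitive). Then the only tiling of Z by integral zonotopes is the trivial tiling consisting of Z and its faces. -/

import Mathlib

open Finset Pointwise MvPolynomial

namespace Hypertoric

/-- Cast an integer vector to a real vector. -/
def castR {n : ℕ} (v : Fin n → ℤ) : Fin n → ℝ := fun i => (v i : ℝ)

/-- Real dot product. -/
def dotR {n : ℕ} (c x : Fin n → ℝ) : ℝ := ∑ i, c i * x i

/-- Integer dot product (evaluation of the functional `m = c·` on `v`). -/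
def dotZ {n : ℕ} (c v : Fin n → ℤ) : ℤ := ∑ i, c i * v i

/-- A coefficient vector `t` adapted to a sign vector `u`:
`t e ∈ [-1,1]` when `u e = 0`, `t e = 1` when `u e = +`, `t e = -1` when `u e = -`. -/
def Adapted {E : Type*} (u : E → SignType) (t : E → ℝ) : Prop :=
  (∀ e, u e = 0 → t e ∈ Set.Icc (-1 : ℝ) 1) ∧ (∀ e, u e = 1 → t e = 1) ∧
    (∀ e, u e = -1 → t e = -1)

/-- The zonotope `Z(a,u) = Σ_{u_e=0}[-1,1]a_e + Σ_{u_e=+}a_e - Σ_{u_e=-}a_e ⊆ N_ℝ`. -/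
def zonotopeSigned {n : ℕ} {E : Type*} [Fintype E] (a : E → Fin n → ℤ)
    (u : E → SignType) : Set (Fin n → ℝ) :=
  {x | ∃ t : E → ℝ, Adapted u t ∧ x = ∑ e, t e • castR (a e)}

/-- The zonotope `Z(a) = Σ_e [-1,1]·a_e`. -/
def zonotope {n : ℕ} {E : Type*} [Fintype E] (a : E → Fin n → ℤ) : Set (Fin n → ℝ) :=
  zonotopeSigned a 0

/-- `F` is a (nonempty) face of `S`: the set of maximizers of a linear functional on `S`. -/
def IsFaceOf {n : ℕ} (F S : Set (Fin n → ℝ)) : Prop :=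
  F.Nonempty ∧ ∃ c : Fin n → ℝ, F = {x ∈ S | ∀ y ∈ S, dotR c y ≤ dotR c x}

/-- An integral zonotope: an integral translate of a zonotope of integral vectors. -/
def IsIntegralZonotope {n : ℕ} (S : Set (Fin n → ℝ)) : Prop :=
  ∃ (m : ℕ) (b : Fin m → Fin n → ℤ) (η : Fin n → ℤ),
    S = (fun x => castR η + x) '' zonotope b

/-- A tiling of `Z` by integral zonotopes. -/
def IsTiling {n : ℕ} (T : Set (Set (Fin n → ℝ))) (Z : Set (Fin n → ℝ)) : Prop :=
  (∀ F ∈ T, IsIntegralZonotope F) ∧ (⋃₀ T = Z) ∧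
    (∀ F' ∈ T, ∀ F, IsFaceOf F F' → F ∈ T) ∧
    (∀ F ∈ T, ∀ F' ∈ T, (F ∩ F').Nonempty → IsFaceOf (F ∩ F') F ∧ IsFaceOf (F ∩ F') F')

/-- A primitive integer vector. -/
def IsPrimitive {n : ℕ} (v : Fin n → ℤ) : Prop :=
  v ≠ 0 ∧ ∀ (k : ℤ) (w : Fin n → ℤ), v = k • w → IsUnit k

/-- A primitive spanning configuration. -/
def IsPrimSpanning {n : ℕ} {E : Type*} (a : E → Fin n → ℤ) : Prop :=
  (∀ e, IsPrimitive (a e)) ∧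
    Submodule.span ℝ (Set.range fun e => castR (a e)) = ⊤

/-- A cube: translate of the zonotope of a `ℤ`-basis of `N`. -/
def IsCube {n : ℕ} (S : Set (Fin n → ℝ)) : Prop :=
  ∃ (b : Fin n → Fin n → ℤ) (η : Fin n → ℤ),
    Submodule.span ℤ (Set.range b) = ⊤ ∧ LinearIndependent ℤ b ∧
    S = (fun x => castR η + x) '' zonotope b

/-- A parallelotope: translate of the zonotope of primitive vectors forming an `ℝ`-basis. -/
def IsParallelotope {n : ℕ} (S : Set (Fin n → ℝ)) : Prop :=
  ∃ (b : Fin n → Fin n → ℤ) (η : Fin n → ℤ),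
    (∀ j, IsPrimitive (b j)) ∧ (LinearIndependent ℝ fun j => castR (b j)) ∧
    S = (fun x => castR η + x) '' zonotope b

section Aux

variable {n : ℕ}

lemma castR_sub (x y : Fin n → ℤ) : castR (x - y) = castR x - castR y := by
  funext i; simp [castR]

lemma adapted_zero_iff {E : Type*} (t : E → ℝ) :
    Adapted (0 : E → SignType) t ↔ ∀ e, t e ∈ Set.Icc (-1:ℝ) 1 := by
  constructor
  · intro h e; exact h.1 e rfl
  · intro h
    refine ⟨fun e _ => h e, fun e he => ?_, fun e he => ?_⟩ <;>
      simp only [Pi.zero_apply] at he <;> exact absurd he (by decide)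

lemma abs_le_one_of_adapted {E : Type*} {u : E → SignType} {t : E → ℝ}
    (h : Adapted u t) (e : E) : |t e| ≤ 1 := by
  obtain ⟨h1, h2, h3⟩ := h
  cases hu : u e with
  | zero => obtain ⟨hl, hr⟩ := h1 e hu; exact abs_le.2 ⟨hl, hr⟩
  | pos => rw [h2 e hu]; norm_num
  | neg => rw [h3 e hu]; norm_num

lemma convex_zonotopeSigned {E : Type*} [Fintype E] (a : E → Fin n → ℤ) (u : E → SignType) :
    Convex ℝ (zonotopeSigned a u) := by
  rintro x ⟨t, ht, rfl⟩ y ⟨s, hs, rfl⟩ μ ν hμ hν hμν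
  refine ⟨fun e => μ * t e + ν * s e, ?_, ?_⟩
  · obtain ⟨h1, h2, h3⟩ := ht; obtain ⟨g1, g2, g3⟩ := hs
    refine ⟨fun e he => ?_, fun e he => ?_, fun e he => ?_⟩ <;> dsimp only
    · obtain ⟨hl, hr⟩ := h1 e he; obtain ⟨gl, gr⟩ := g1 e he
      constructor <;> nlinarith
    · rw [h2 e he, g2 e he]; linarith
    · rw [h3 e he, g3 e he]; linarith
  · rw [Finset.smul_sum, Finset.smul_sum, ← Finset.sum_add_distrib]
    exact Finset.sum_congr rfl fun e _ => by rw [smul_smul, smul_smul, ← add_smul]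

lemma isCompact_zonotopeSigned {E : Type*} [Fintype E] (a : E → Fin n → ℤ) (u : E → SignType) :
    IsCompact (zonotopeSigned a u) := by
  classical
  have h1 : zonotopeSigned a u =
      (fun t : E → ℝ => ∑ e, t e • castR (a e)) '' {t | Adapted u t} := by
    ext x
    simp only [zonotopeSigned, Set.mem_setOf_eq, Set.mem_image]
    exact ⟨fun ⟨t, ht, hx⟩ => ⟨t, ht, hx.symm⟩, fun ⟨t, ht, hx⟩ => ⟨t, ht, hx.symm⟩⟩
  have h2 : {t : E → ℝ | Adapted u t} = Set.pi Set.univ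
      (fun e => if u e = 0 then Set.Icc (-1:ℝ) 1 else if u e = 1 then {1} else {-1}) := by
    ext t
    simp only [Set.mem_setOf_eq, Set.mem_pi, Set.mem_univ, true_implies]
    constructor
    · intro ⟨h1', h2', h3'⟩ e
      cases hu : u e with
      | zero => simpa [hu] using h1' e hu
      | pos => simpa [hu] using h2' e hu
      | neg => simpa [hu] using h3' e hu
    · intro h
      refine ⟨fun e he => by simpa [he] using h e, fun e he => by simpa [he] using h e,
        fun e he => by simpa [he] using h e⟩
  rw [h1, h2]
  refine IsCompact.image (isCompact_univ_pi fun e => ?_)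
    (continuous_finset_sum _ fun e _ => (continuous_apply e).smul continuous_const)
  split_ifs
  · exact isCompact_Icc
  · exact isCompact_singleton
  · exact isCompact_singleton

lemma integralZonotope_center {S : Set (Fin n → ℝ)} (h : IsIntegralZonotope S) :
    ∃ η : Fin n → ℤ, castR η ∈ S ∧ ∀ x ∈ S, (2:ℝ) • castR η - x ∈ S := by
  obtain ⟨m, b, η, rfl⟩ := h
  refine ⟨η, ⟨0, ⟨0, ?_, by simp⟩, by simp⟩, ?_⟩
  · exact (adapted_zero_iff 0).2 fun e => by norm_num
  · rintro x ⟨z, ⟨t, ht, rfl⟩, rfl⟩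
    refine ⟨∑ e : Fin m, (-(t e)) • castR (b e), ⟨fun e => -(t e), ?_, rfl⟩, ?_⟩
    · refine (adapted_zero_iff _).2 fun e => ?_
      have := ((adapted_zero_iff t).1 ht) e
      simp only [Set.mem_Icc] at this ⊢
      constructor <;> linarith [this.1, this.2]
    · have hneg : ∑ e : Fin m, (-(t e)) • castR (b e)
          = -(∑ e : Fin m, t e • castR (b e)) := by
        rw [← Finset.sum_neg_distrib]
        exact Finset.sum_congr rfl fun e _ => by rw [neg_smul]
      rw [hneg, two_smul]
      beta_reduce
      abel

lemma isClosed_of_integral {S : Set (Fin n → ℝ)} (h : IsIntegralZonotope S) : IsClosed S := by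
  obtain ⟨m, b, η, rfl⟩ := h
  exact (((isCompact_zonotopeSigned b 0).image
    (continuous_const.add continuous_id)).isClosed)

lemma convex_of_integral {S : Set (Fin n → ℝ)} (h : IsIntegralZonotope S) : Convex ℝ S := by
  obtain ⟨m, b, η, rfl⟩ := h
  exact (convex_zonotopeSigned b 0).translate (castR η)

lemma dotR_comb (c p y : Fin n → ℝ) : dotR c ((2:ℝ) • p - y) = 2 * dotR c p - dotR c y := by
  unfold dotR
  rw [Finset.mul_sum, ← Finset.sum_sub_distrib]
  refine Finset.sum_congr rfl fun i _ => ?_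
  simp only [Pi.sub_apply, Pi.smul_apply, smul_eq_mul]
  ring

lemma face_eq_of_center_mem {S W : Set (Fin n → ℝ)} {p : Fin n → ℝ}
    (hsym : ∀ y ∈ S, (2:ℝ) • p - y ∈ S) (hW : IsFaceOf W S) (hp : p ∈ W) : W = S := by
  obtain ⟨-, c, rfl⟩ := hW
  obtain ⟨hpS, hpmax⟩ := hp
  ext y
  constructor
  · exact fun h => h.1
  · intro hy
    refine ⟨hy, fun z hz => ?_⟩
    have h1 := hpmax _ (hsym y hy)
    have h2 := hpmax z hz
    rw [dotR_comb] at h1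
    linarith

end Aux

section Prim

variable {n : ℕ}

lemma isPrimitive_ratio {v : Fin n → ℤ} (hv : IsPrimitive v) {x : Fin n → ℤ} {lam : ℝ}
    (h : castR x = lam • castR v) : ∃ k : ℤ, lam = (k : ℝ) := by
  obtain ⟨hv0, hvp⟩ := hv
  obtain ⟨i0, hi0⟩ : ∃ i, v i ≠ 0 := by
    by_contra hc; push_neg at hc; exact hv0 (funext fun i => hc i)
  have hx : ∀ i, (x i : ℝ) = lam * (v i : ℝ) := fun i => by
    have := congrFun h i
    simpa [castR, Pi.smul_apply, smul_eq_mul] using this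
  have hcross : ∀ i, x i * v i0 = x i0 * v i := by
    intro i
    have : ((x i * v i0 : ℤ) : ℝ) = ((x i0 * v i : ℤ) : ℝ) := by
      push_cast
      rw [hx i, hx i0]; ring
    exact_mod_cast this
  set g : ℤ := (Int.gcd (x i0) (v i0) : ℤ) with hg
  have hgv : g ∣ v i0 := Int.gcd_dvd_right _ _
  have hgx : g ∣ x i0 := Int.gcd_dvd_left _ _
  have hgpos : 0 < Int.gcd (x i0) (v i0) :=
    Int.gcd_pos_iff.2 (Or.inr hi0)
  have hgne : g ≠ 0 := by positivity
  set p : ℤ := x i0 / g with hp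
  set q : ℤ := v i0 / g with hq
  have hgq : g * q = v i0 := Int.mul_ediv_cancel' hgv
  have hgp : g * p = x i0 := Int.mul_ediv_cancel' hgx
  have hcop : Int.gcd p q = 1 := Int.gcd_div_gcd_div_gcd hgpos
  have hqdvd : ∀ i, q ∣ v i := by
    intro i
    have h1 : x i * (g * q) = (g * p) * v i := by rw [hgq, hgp]; exact hcross i
    have h2 : x i * q = p * v i := by
      have : g * (x i * q) = g * (p * v i) := by linear_combination h1
      exact mul_left_cancel₀ hgne this
    have : q ∣ p * v i := ⟨x i, by rw [← h2]; ring⟩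
    exact Int.dvd_of_dvd_mul_right_of_gcd_one this (by rwa [Int.gcd_comm])
  have hw : v = q • (fun i => v i / q) := by
    funext i
    simp only [Pi.smul_apply, smul_eq_mul]
    exact (Int.mul_ediv_cancel' (hqdvd i)).symm
  have hunit := hvp q _ hw
  have hq1 : q = 1 ∨ q = -1 := Int.isUnit_iff.1 hunit
  have hq2 : (q : ℝ) * q = 1 := by rcases hq1 with h | h <;> rw [h] <;> norm_num
  refine ⟨p * q, ?_⟩
  have hvne : (v i0 : ℝ) ≠ 0 := Int.cast_ne_zero.2 hi0
  have key : ((p * q : ℤ) : ℝ) * (v i0 : ℝ) = lam * (v i0 : ℝ) := by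
    rw [← hx i0, ← hgp, ← hgq]
    push_cast
    linear_combination ((p : ℝ) * g) * hq2
  exact (mul_right_cancel₀ hvne key).symm

end Prim

section Hull

variable {n : ℕ}

lemma zonotope_eq_convexHull {m : ℕ} (c : Fin m → Fin n → ℤ) :
    zonotope c = convexHull ℝ ((fun t : Fin m → ℝ => ∑ i, t i • castR (c i)) ''
      (Set.pi Set.univ fun _ => ({-1, 1} : Set ℝ))) := by
  set L : (Fin m → ℝ) →ₗ[ℝ] (Fin n → ℝ) :=
    ∑ i : Fin m, LinearMap.smulRight (LinearMap.proj i) (castR (c i)) with hLdef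
  have hLa : ∀ t, L t = ∑ i, t i • castR (c i) := by
    intro t
    simp [hLdef, LinearMap.sum_apply]
  have h1 : zonotope c = L '' (Set.pi Set.univ fun _ => Set.Icc (-1:ℝ) 1) := by
    ext x
    simp only [zonotope, zonotopeSigned, Set.mem_setOf_eq, Set.mem_image, Set.mem_pi,
      Set.mem_univ, true_implies]
    constructor
    · rintro ⟨t, ht, rfl⟩
      exact ⟨t, (adapted_zero_iff t).1 ht, (hLa t)⟩
    · rintro ⟨t, ht, rfl⟩
      exact ⟨t, (adapted_zero_iff t).2 ht, (hLa t)⟩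
  have h3 : ∀ i : Fin m, Set.Icc (-1:ℝ) 1 = convexHull ℝ ({-1, 1} : Set ℝ) := fun i => by
    rw [convexHull_pair, segment_eq_Icc (by norm_num : (-1:ℝ) ≤ 1)]
  have h2 : (Set.pi Set.univ fun _ : Fin m => Set.Icc (-1:ℝ) 1) =
      convexHull ℝ (Set.pi Set.univ fun _ : Fin m => ({-1,1} : Set ℝ)) := by
    rw [convexHull_pi]
    exact Set.pi_congr rfl fun i _ => h3 i
  rw [h1, h2, L.image_convexHull]
  congr 1
  have : ⇑L = fun t : Fin m → ℝ => ∑ i, t i • castR (c i) := funext hLa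
  rw [this]

lemma integral_eq_hull_latticePoints {S : Set (Fin n → ℝ)} (h : IsIntegralZonotope S) :
    S = convexHull ℝ (castR '' {v : Fin n → ℤ | castR v ∈ S}) := by
  classical
  obtain ⟨m, c, η, rfl⟩ := h
  set S := (fun x => castR η + x) '' zonotope c with hS
  set A := ((fun t : Fin m → ℝ => ∑ i, t i • castR (c i)) ''
      (Set.pi Set.univ fun _ => ({-1, 1} : Set ℝ))) with hA
  have h1 : S = convexHull ℝ ((fun x => castR η + x) '' A) := by
    rw [hS, zonotope_eq_convexHull c, ← hA, ← Set.singleton_add, ← Set.singleton_add,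
      convexHull_add, convexHull_singleton]
  have h2 : (fun x => castR η + x) '' A ⊆ castR '' {v : Fin n → ℤ | castR v ∈ S} := by
    rintro x ⟨z, ⟨t, ht, rfl⟩, rfl⟩
    have hint : castR η + ∑ i, t i • castR (c i)
        = castR (η + ∑ i, (if t i = 1 then (1:ℤ) else -1) • c i) := by
      funext j
      simp only [castR, Pi.add_apply, Finset.sum_apply, Pi.smul_apply, smul_eq_mul]
      push_cast
      refine congrArg _ ?_
      refine Finset.sum_congr rfl fun i _ => ?_
      rcases ht i (Set.mem_univ i) with h' | h'
      · rw [h']; norm_num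
      · simp only [Set.mem_singleton_iff] at h'
        rw [h']; norm_num
    have hmem : castR η + ∑ i, t i • castR (c i) ∈ S := by
      rw [h1]
      exact subset_convexHull ℝ _ ⟨∑ i, t i • castR (c i), ⟨t, ht, rfl⟩, rfl⟩
    refine ⟨η + ∑ i, (if t i = 1 then (1:ℤ) else -1) • c i, ?_, hint.symm⟩
    simp only [Set.mem_setOf_eq, ← hint]
    exact hmem
  have hconv : Convex ℝ S := convex_of_integral ⟨m, c, η, hS⟩
  have h3 : castR '' {v : Fin n → ℤ | castR v ∈ S} ⊆ S := by
    rintro x ⟨v, hv, rfl⟩; exact hv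
  refine le_antisymm ?_ ?_
  · calc S = convexHull ℝ ((fun x => castR η + x) '' A) := h1
      _ ⊆ convexHull ℝ (castR '' {v : Fin n → ℤ | castR v ∈ S}) := convexHull_mono h2
  · calc convexHull ℝ (castR '' {v : Fin n → ℤ | castR v ∈ S})
        ⊆ convexHull ℝ S := convexHull_mono h3
      _ = S := hconv.convexHull_eq

end Hull

section Finiteness

variable {n : ℕ}

lemma tiling_finite {E : Type*} [Fintype E] {a : E → Fin n → ℤ} {u : E → SignType}
    {T : Set (Set (Fin n → ℝ))} (hT : IsTiling T (zonotopeSigned a u)) : T.Finite := by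
  classical
  set Z := zonotopeSigned a u with hZ
  have hZP : {v : Fin n → ℤ | castR v ∈ Z}.Finite := by
    refine Set.Finite.subset
      (Set.Finite.pi fun i => Set.finite_Icc (-(∑ e, |a e i|)) (∑ e, |a e i|)) ?_
    rintro v hv
    simp only [Set.mem_pi, Set.mem_univ, true_implies]
    intro i
    rw [Set.mem_Icc, ← abs_le]
    obtain ⟨t, ht, hvx⟩ := hv
    have h1 : (v i : ℝ) = ∑ e, t e * (a e i : ℝ) := by
      have := congrFun hvx i
      simpa [castR, Finset.sum_apply, Pi.smul_apply, smul_eq_mul] using this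
    have h2 : |(v i : ℝ)| ≤ ((∑ e, |a e i| : ℤ) : ℝ) := by
      rw [h1]
      push_cast
      refine (Finset.abs_sum_le_sum_abs _ _).trans ?_
      refine Finset.sum_le_sum fun e _ => ?_
      rw [abs_mul]
      have h3 := abs_le_one_of_adapted ht e
      have h0 : (0:ℝ) ≤ |(a e i : ℝ)| := abs_nonneg _
      nlinarith [abs_nonneg (t e)]
    rw [← Int.cast_abs] at h2
    exact_mod_cast h2
  have hsub : ∀ F ∈ T, F ⊆ Z := by
    intro F hF
    rw [← hT.2.1]
    exact Set.subset_sUnion_of_mem hF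
  have hinj : Set.InjOn (fun F => {v : Fin n → ℤ | castR v ∈ F}) T := by
    intro F1 h1 F2 h2 h
    rw [integral_eq_hull_latticePoints (hT.1 F1 h1), integral_eq_hull_latticePoints (hT.1 F2 h2)]
    simp only at h
    rw [h]
  refine Set.Finite.of_finite_image (Set.Finite.subset hZP.finite_subsets ?_) hinj
  rintro A ⟨F, hF, rfl⟩
  exact fun v hv => hsub F hF hv

end Finiteness

section Coords

variable {n : ℕ}

/-- The center of a signed zonotope. -/
def ctr (a : Fin n → Fin n → ℤ) (u : Fin n → SignType) : Fin n → ℝ :=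
  ∑ e, ((u e : ℝ)) • castR (a e)

lemma adapted_coe (u : Fin n → SignType) : Adapted u (fun e => ((u e : ℝ))) := by
  refine ⟨fun e he => ?_, fun e he => ?_, fun e he => ?_⟩ <;> dsimp only <;> rw [he] <;>
    simp [SignType.coe_zero, SignType.coe_one, SignType.coe_neg_one] <;> norm_num

lemma ctr_mem (a : Fin n → Fin n → ℤ) (u : Fin n → SignType) :
    ctr a u ∈ zonotopeSigned a u :=
  ⟨fun e => ((u e : ℝ)), adapted_coe u, rfl⟩

lemma zs_symm (a : Fin n → Fin n → ℤ) (u : Fin n → SignType) :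
    ∀ y ∈ zonotopeSigned a u, (2:ℝ) • ctr a u - y ∈ zonotopeSigned a u := by
  rintro y ⟨t, ht, rfl⟩
  obtain ⟨h1, h2, h3⟩ := ht
  refine ⟨fun e => 2 * ((u e : ℝ)) - t e, ⟨fun e he => ?_, fun e he => ?_, fun e he => ?_⟩, ?_⟩
  · obtain ⟨hl, hr⟩ := h1 e he
    dsimp only
    rw [he]
    simp only [SignType.coe_zero, Set.mem_Icc]
    constructor <;> linarith
  · dsimp only
    rw [he, h2 e he]
    simp [SignType.coe_one]
    norm_num
  · dsimp only
    rw [he, h3 e he]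
    simp [SignType.coe_neg_one]
    ring
  · unfold ctr
    rw [Finset.smul_sum, ← Finset.sum_sub_distrib]
    refine Finset.sum_congr rfl fun e _ => ?_
    rw [smul_smul, ← sub_smul]

variable {a : Fin n → Fin n → ℤ} {B : Module.Basis (Fin n) ℝ (Fin n → ℝ)}

lemma repr_sum (hB : ∀ e, B e = castR (a e)) (t : Fin n → ℝ) (e : Fin n) :
    B.repr (∑ f, t f • castR (a f)) e = t e := by
  have h : ∑ f, t f • castR (a f) = ∑ f, t f • B f := by
    refine Finset.sum_congr rfl fun f _ => by rw [hB]
  rw [h]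
  exact congrFun (B.repr_sum_self t) e

lemma mem_zs (hB : ∀ e, B e = castR (a e)) (u : Fin n → SignType) (x : Fin n → ℝ) :
    x ∈ zonotopeSigned a u ↔ Adapted u (fun e => B.repr x e) := by
  constructor
  · rintro ⟨t, ht, rfl⟩
    have h : (fun e => B.repr (∑ f, t f • castR (a f)) e) = t := funext (repr_sum hB t)
    rw [h]
    exact ht
  · intro h
    refine ⟨fun e => B.repr x e, h, ?_⟩
    have h2 := B.sum_repr x
    conv_lhs => rw [← h2]
    exact Finset.sum_congr rfl fun e _ => by rw [hB]

lemma repr_ctr (hB : ∀ e, B e = castR (a e)) (u : Fin n → SignType) (e : Fin n) :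
    B.repr (ctr a u) e = ((u e : ℝ)) :=
  repr_sum hB _ e

lemma repr_comb (w y : Fin n → ℝ) (e : Fin n) :
    B.repr ((2:ℝ) • w - y) e = 2 * B.repr w e - B.repr y e := by
  simp [map_sub, map_smul]

lemma exists_dotR_eq_coord (e₀ : Fin n) :
    ∃ c : Fin n → ℝ, ∀ x, dotR c x = B.repr x e₀ := by
  classical
  refine ⟨fun i => B.coord e₀ (fun j => if i = j then (1:ℝ) else 0), fun x => ?_⟩
  have h := LinearMap.pi_apply_eq_sum_univ (B.coord e₀) x
  rw [← B.coord_apply, h]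
  unfold dotR
  exact Finset.sum_congr rfl fun i _ => by rw [smul_eq_mul, mul_comm]

lemma mem_update_one_iff (hB : ∀ e, B e = castR (a e)) {u : Fin n → SignType} {e₀ : Fin n}
    (hu0 : u e₀ = 0) (y : Fin n → ℝ) :
    y ∈ zonotopeSigned a (Function.update u e₀ 1) ↔
      y ∈ zonotopeSigned a u ∧ B.repr y e₀ = 1 := by
  classical
  rw [mem_zs hB, mem_zs hB]
  constructor
  · rintro ⟨h1, h2, h3⟩
    have he0 : B.repr y e₀ = 1 := h2 e₀ (by simp)
    refine ⟨⟨fun e he => ?_, fun e he => ?_, fun e he => ?_⟩, he0⟩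
    · rcases eq_or_ne e e₀ with rfl | hne
      · dsimp only; rw [he0]; constructor <;> norm_num
      · exact h1 e (by simpa [Function.update_of_ne hne] using he)
    · rcases eq_or_ne e e₀ with rfl | hne
      · exact he0
      · exact h2 e (by simpa [Function.update_of_ne hne] using he)
    · rcases eq_or_ne e e₀ with rfl | hne
      · rw [hu0] at he; exact absurd he (by decide)
      · exact h3 e (by simpa [Function.update_of_ne hne] using he)
  · rintro ⟨⟨h1, h2, h3⟩, he0⟩
    refine ⟨fun e he => ?_, fun e he => ?_, fun e he => ?_⟩
    · rcases eq_or_ne e e₀ with rfl | hne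
      · rw [Function.update_self] at he; exact absurd he (by decide)
      · exact h1 e (by simpa [Function.update_of_ne hne] using he)
    · rcases eq_or_ne e e₀ with rfl | hne
      · exact he0
      · exact h2 e (by simpa [Function.update_of_ne hne] using he)
    · rcases eq_or_ne e e₀ with rfl | hne
      · rw [Function.update_self] at he; exact absurd he (by decide)
      · exact h3 e (by simpa [Function.update_of_ne hne] using he)

lemma update_subset (hB : ∀ e, B e = castR (a e)) {u : Fin n → SignType} {e₀ : Fin n}
    (hu0 : u e₀ = 0) :
    zonotopeSigned a (Function.update u e₀ 1) ⊆ zonotopeSigned a u := fun y hy =>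
  ((mem_update_one_iff hB hu0 y).1 hy).1

lemma trace_face (hB : ∀ e, B e = castR (a e)) {u : Fin n → SignType} {e₀ : Fin n}
    (hu0 : u e₀ = 0) {F : Set (Fin n → ℝ)} (hFP : F ⊆ zonotopeSigned a u) {x : Fin n → ℝ}
    (hx : x ∈ F ∩ zonotopeSigned a (Function.update u e₀ 1)) :
    IsFaceOf (F ∩ zonotopeSigned a (Function.update u e₀ 1)) F := by
  obtain ⟨c, hc⟩ := exists_dotR_eq_coord (B := B) e₀
  refine ⟨⟨x, hx⟩, c, ?_⟩
  ext y
  simp only [Set.mem_inter_iff, Set.mem_setOf_eq]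
  constructor
  · rintro ⟨hyF, hyG⟩
    refine ⟨hyF, fun z hz => ?_⟩
    rw [hc, hc]
    have hz1 : B.repr z e₀ ≤ 1 := (((mem_zs hB u z).1 (hFP hz)).1 e₀ hu0).2
    have hy1 : B.repr y e₀ = 1 := ((mem_update_one_iff hB hu0 y).1 hyG).2
    rw [hy1]; exact hz1
  · rintro ⟨hyF, hymax⟩
    refine ⟨hyF, (mem_update_one_iff hB hu0 y).2 ⟨hFP hyF, ?_⟩⟩
    have h1 := hymax x hx.1
    rw [hc, hc] at h1
    have hx1 : B.repr x e₀ = 1 := ((mem_update_one_iff hB hu0 x).1 hx.2).2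
    have h2 : B.repr y e₀ ≤ 1 := (((mem_zs hB u y).1 (hFP hyF)).1 e₀ hu0).2
    linarith

end Coords

section Dichotomy

variable {n : ℕ}

lemma signType_cast_cast (s : SignType) : ((s : ℤ) : ℝ) = (s : ℝ) := by
  cases s <;> simp

lemma adapted_pin (u : Fin n → SignType) (e : Fin n) (hue : u e = 0) {s : ℝ}
    (hs : s ∈ Set.Icc (-1:ℝ) 1) :
    Adapted u (fun f => if f = e then s else ((u f : ℝ))) := by
  refine ⟨fun f hf => ?_, fun f hf => ?_, fun f hf => ?_⟩ <;> dsimp only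
  · split_ifs with h
    · exact hs
    · rw [hf]; simp
  · split_ifs with h
    · subst h; rw [hue] at hf; exact absurd hf (by decide)
    · rw [hf]; simp
  · split_ifs with h
    · subst h; rw [hue] at hf; exact absurd hf (by decide)
    · rw [hf]; simp

variable {a : Fin n → Fin n → ℤ} {B : Module.Basis (Fin n) ℝ (Fin n → ℝ)}

lemma dichotomy (hB : ∀ e, B e = castR (a e)) (hprim : ∀ e, IsPrimitive (a e))
    {u : Fin n → SignType} {e₀ : Fin n} (hu0 : u e₀ = 0)
    {F : Set (Fin n → ℝ)} (hFint : IsIntegralZonotope F)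
    (hFP : F ⊆ zonotopeSigned a u)
    (hGF : zonotopeSigned a (Function.update u e₀ 1) ⊆ F) :
    F = zonotopeSigned a (Function.update u e₀ 1) ∨ F = zonotopeSigned a u := by
  classical
  obtain ⟨η, hηF, hsymm⟩ := integralZonotope_center hFint
  set u' := Function.update u e₀ 1 with hu'
  set σ : Fin n → ℝ := fun e => (B.repr (castR η) e : ℝ) with hσdef
  have hu'e₀ : u' e₀ = 1 := Function.update_self e₀ 1 u
  have hcoeu' : ((u' e₀ : ℝ)) = 1 := by rw [hu'e₀]; simp
  -- free coordinates of the center vanish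
  have hfree : ∀ e, e ≠ e₀ → u e = 0 → σ e = 0 := by
    intro e hne hue
    have hu'e : u' e = 0 := by rw [hu', Function.update_of_ne hne]; exact hue
    have key : ∀ s : ℝ, s ∈ Set.Icc (-1:ℝ) 1 → 2 * σ e - s ∈ Set.Icc (-1:ℝ) 1 := by
      intro s hs
      set y := ∑ f, (if f = e then s else ((u' f : ℝ))) • castR (a f) with hy
      have hyG : y ∈ zonotopeSigned a u' := ⟨_, adapted_pin u' e hu'e hs, rfl⟩
      have hyF : y ∈ F := hGF hyG
      have hrP := (mem_zs hB u _).1 (hFP (hsymm _ hyF))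
      have h1 := hrP.1 e hue
      try dsimp only at h1
      try dsimp only at h1
      rw [repr_comb] at h1
      have h2 : B.repr y e = s := by
        rw [hy, repr_sum hB]
        simp
      rw [h2] at h1
      exact h1
    have k1 := key 1 (by norm_num)
    have k2 := key (-1) (by norm_num)
    simp only [Set.mem_Icc] at k1 k2
    have : σ e = 0 := by linarith [k1.1, k1.2, k2.1, k2.2]
    exact this
  -- supported coordinates of the center
  have hsupp : ∀ e, u e ≠ 0 → σ e = ((u e : ℝ)) := by
    intro e hue
    have hηP := (mem_zs hB u _).1 (hFP hηF)
    have hσe : σ e = B.repr (castR η) e := rfl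
    cases hc : u e with
    | zero => exact absurd hc hue
    | pos =>
      have h := hηP.2.1 e hc
      try dsimp only at h
      rw [hσe, h, SignType.pos_eq_one]; simp
    | neg =>
      have h := hηP.2.2 e hc
      try dsimp only at h
      rw [hσe, h, SignType.neg_eq_neg_one]; simp
  -- the center of the top facet
  have hpG : ctr a u' ∈ zonotopeSigned a u' := ctr_mem a u'
  have hpF : ctr a u' ∈ F := hGF hpG
  have hβ : 2 * σ e₀ - 1 ∈ Set.Icc (-1:ℝ) 1 := by
    have hrP := (mem_zs hB u _).1 (hFP (hsymm _ hpF))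
    have h1 := hrP.1 e₀ hu0
    try dsimp only at h1
    rw [repr_comb, repr_ctr hB, hcoeu'] at h1
    exact h1
  -- integrality of the e₀-coordinate of the center
  have hk : ∃ k : ℤ, σ e₀ - 1 = (k : ℝ) := by
    set q : Fin n → ℤ := fun i => ∑ f, (u' f : ℤ) * a f i with hq
    have hcastq : castR q = ctr a u' := by
      funext i
      simp only [castR, hq, ctr, Finset.sum_apply, Pi.smul_apply, smul_eq_mul]
      push_cast
      rfl
    have hreprd : ∀ e, B.repr (castR (η - q)) e = σ e - ((u' e : ℝ)) := by
      intro e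
      rw [castR_sub, map_sub, hcastq]
      simp only [Finsupp.sub_apply]
      rw [repr_ctr hB]
    have hzero : ∀ e, e ≠ e₀ → B.repr (castR (η - q)) e = 0 := by
      intro e hne
      rw [hreprd e]
      rcases hc : u e with _ | _ | _
      · rw [hfree e hne hc, hu', Function.update_of_ne hne, hc]
        simp
      · rw [hsupp e (by rw [hc]; decide), hu', Function.update_of_ne hne, hc]
        ring
      · rw [hsupp e (by rw [hc]; decide), hu', Function.update_of_ne hne, hc]
        ring
    have hx : castR (η - q) = (σ e₀ - 1) • castR (a e₀) := by
      have h := (B.sum_repr (castR (η - q))).symm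
      rw [h, Finset.sum_eq_single e₀]
      · rw [hB, hreprd e₀, hcoeu']
      · intro b _ hb
        rw [hzero b hb, zero_smul]
      · intro h'
        exact absurd (Finset.mem_univ e₀) h'
    exact isPrimitive_ratio (hprim e₀) hx
  obtain ⟨k, hkk⟩ := hk
  simp only [Set.mem_Icc] at hβ
  have hσ0 : σ e₀ = (k : ℝ) + 1 := by linarith
  have hkbound : k = -1 ∨ k = 0 := by
    have h1 : (-1 : ℝ) ≤ (k : ℝ) := by linarith [hβ.1]
    have h2 : (k : ℝ) ≤ 0 := by linarith [hβ.2]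
    have h1' : (-1 : ℤ) ≤ k := by exact_mod_cast h1
    have h2' : k ≤ 0 := by exact_mod_cast h2
    omega
  rcases hkbound with hcase | hcase
  · -- k = -1 : σ e₀ = 0, F is the whole zonotope
    right
    have hσz : σ e₀ = 0 := by rw [hσ0, hcase]; norm_num
    refine Set.Subset.antisymm hFP ?_
    intro x hxP
    obtain ⟨ht1, ht2, ht3⟩ := (mem_zs hB u x).1 hxP
    set t : Fin n → ℝ := fun e => (B.repr x e : ℝ) with htdef
    have ht0 := ht1 e₀ hu0
    simp only [Set.mem_Icc] at ht0
    set y := ∑ f, (if f = e₀ then (1:ℝ) else t f) • castR (a f) with hy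
    have hyG : y ∈ zonotopeSigned a u' := by
      refine ⟨_, ⟨fun f hf => ?_, fun f hf => ?_, fun f hf => ?_⟩, rfl⟩
      · have hne : f ≠ e₀ := by
          intro hfe; subst hfe; rw [hu'e₀] at hf; exact absurd hf (by decide)
        have huf : u f = 0 := by rwa [hu', Function.update_of_ne hne] at hf
        rw [if_neg hne]
        exact ht1 f huf
      · rcases eq_or_ne f e₀ with rfl | hne
        · rw [if_pos rfl]
        · rw [if_neg hne]
          exact ht2 f (by rwa [hu', Function.update_of_ne hne] at hf)
      · have hne : f ≠ e₀ := by
          intro hfe; subst hfe; rw [hu'e₀] at hf; exact absurd hf (by decide)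
        rw [if_neg hne]
        exact ht3 f (by rwa [hu', Function.update_of_ne hne] at hf)
    set w := ∑ f, (if f = e₀ then (1:ℝ) else 2 * σ f - t f) • castR (a f) with hw
    have hwG : w ∈ zonotopeSigned a u' := by
      refine ⟨_, ⟨fun f hf => ?_, fun f hf => ?_, fun f hf => ?_⟩, rfl⟩
      · have hne : f ≠ e₀ := by
          intro hfe; subst hfe; rw [hu'e₀] at hf; exact absurd hf (by decide)
        have huf : u f = 0 := by rwa [hu', Function.update_of_ne hne] at hf
        rw [if_neg hne, hfree f hne huf]
        have := ht1 f huf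
        simp only [Set.mem_Icc] at this ⊢
        constructor <;> linarith [this.1, this.2]
      · rcases eq_or_ne f e₀ with rfl | hne
        · rw [if_pos rfl]
        · have huf : u f = 1 := by rwa [hu', Function.update_of_ne hne] at hf
          rw [if_neg hne, hsupp f (by rw [huf]; decide), ht2 f huf, huf]
          simp
          norm_num
      · have hne : f ≠ e₀ := by
          intro hfe; subst hfe; rw [hu'e₀] at hf; exact absurd hf (by decide)
        have huf : u f = -1 := by rwa [hu', Function.update_of_ne hne] at hf
        rw [if_neg hne, hsupp f (by rw [huf]; decide), ht3 f huf, huf]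
        simp
        norm_num
    have hzF : (2:ℝ) • castR η - w ∈ F := hsymm _ (hGF hwG)
    set μ : ℝ := (t e₀ + 1) / 2 with hμ
    have hμ0 : 0 ≤ μ := by rw [hμ]; linarith [ht0.1]
    have hμ1 : 0 ≤ 1 - μ := by rw [hμ]; linarith [ht0.2]
    have hxcomb : x = μ • y + (1 - μ) • ((2:ℝ) • castR η - w) := by
      apply B.repr.injective
      ext e
      rw [map_add, map_smul, map_smul]
      simp only [Finsupp.coe_add, Finsupp.coe_smul, Pi.add_apply, Pi.smul_apply, smul_eq_mul]
      have hye : B.repr y e = if e = e₀ then 1 else t e := by rw [hy, repr_sum hB]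
      have hwe : B.repr ((2:ℝ) • castR η - w) e
          = 2 * σ e - (if e = e₀ then (1:ℝ) else 2 * σ e - t e) := by
        rw [repr_comb]
        congr 1
        rw [hw, repr_sum hB]
      rw [hye, hwe]
      rcases eq_or_ne e e₀ with rfl | hne
      · split_ifs with h
        · rw [hσz, hμ]; ring
        · exact absurd rfl h
      · split_ifs with h
        · exact absurd h hne
        · ring
    rw [hxcomb]
    exact convex_of_integral hFint (hGF hyG) hzF hμ0 hμ1 (by ring)
  · -- k = 0 : σ e₀ = 1, F is the top facet
    left
    have hσ1 : σ e₀ = 1 := by rw [hσ0, hcase]; norm_num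
    refine Set.Subset.antisymm ?_ hGF
    intro x hxF
    have hxP := hFP hxF
    have hup : B.repr x e₀ ≤ 1 := (((mem_zs hB u x).1 hxP).1 e₀ hu0).2
    have hlow : 1 ≤ B.repr x e₀ := by
      have hrP := (mem_zs hB u _).1 (hFP (hsymm _ hxF))
      have h1 := (hrP.1 e₀ hu0).2
      try dsimp only at h1
      rw [repr_comb] at h1
      rw [show B.repr (castR η) e₀ = σ e₀ from rfl, hσ1] at h1
      linarith
    exact (mem_update_one_iff hB hu0 x).2 ⟨hxP, le_antisymm hup hlow⟩

end Dichotomy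

section Main

variable {n : ℕ} {a : Fin n → Fin n → ℤ} {B : Module.Basis (Fin n) ℝ (Fin n → ℝ)}

lemma tiling_self_mem (hB : ∀ e, B e = castR (a e)) (hprim : ∀ e, IsPrimitive (a e)) :
    ∀ (k : ℕ) (u : Fin n → SignType),
      (Finset.univ.filter fun e => u e = 0).card = k →
      ∀ T : Set (Set (Fin n → ℝ)), IsTiling T (zonotopeSigned a u) →
        zonotopeSigned a u ∈ T := by
  classical
  intro k
  induction k using Nat.strong_induction_on with
  | _ k IH =>
    intro u hk T hT
    by_cases h0 : ∃ e₀, u e₀ = 0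
    · obtain ⟨e₀, hu0⟩ := h0
      set u' := Function.update u e₀ 1 with hu'
      set G := zonotopeSigned a u' with hG
      set P := zonotopeSigned a u with hP
      have hu'e₀ : u' e₀ = 1 := Function.update_self e₀ 1 u
      have hGP : G ⊆ P := update_subset hB hu0
      have hsub : ∀ F ∈ T, F ⊆ P := by
        intro F hF
        rw [← hT.2.1]
        exact Set.subset_sUnion_of_mem hF
      have hTG : IsTiling {F | F ∈ T ∧ F ⊆ G} G := by
        refine ⟨fun F hF => hT.1 F hF.1, ?_, ?_, ?_⟩
        · refine Set.Subset.antisymm (Set.sUnion_subset fun F hF => hF.2) ?_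
          intro x hxG
          have hxP : x ∈ P := hGP hxG
          rw [← hT.2.1] at hxP
          obtain ⟨F, hF, hxF⟩ := hxP
          have hface := trace_face hB hu0 (hsub F hF) (x := x) ⟨hxF, hxG⟩
          have hmem : F ∩ G ∈ T := hT.2.2.1 F hF _ hface
          exact ⟨F ∩ G, ⟨hmem, Set.inter_subset_right⟩, ⟨hxF, hxG⟩⟩
        · intro F' hF' W hW
          refine ⟨hT.2.2.1 F' hF'.1 W hW, ?_⟩
          obtain ⟨-, c, rfl⟩ := hW
          exact fun y hy => hF'.2 hy.1
        · intro F hF F' hF' hne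
          exact hT.2.2.2 F hF.1 F' hF'.1 hne
      have hcard : (Finset.univ.filter fun e => u' e = 0).card < k := by
        have h1 : (Finset.univ.filter fun e => u' e = 0)
            = (Finset.univ.filter fun e => u e = 0).erase e₀ := by
          ext e
          simp only [Finset.mem_filter, Finset.mem_erase, Finset.mem_univ, true_and]
          rcases eq_or_ne e e₀ with rfl | hne
          · simp [hu', Function.update_self]
          · simp [hu', Function.update_of_ne hne, hne]
        rw [h1, ← hk]
        exact Finset.card_erase_lt_of_mem (by simp [hu0])
      have hGT : G ∈ T := (IH _ hcard u' rfl {F | F ∈ T ∧ F ⊆ G} hTG).1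
      have hpG : ctr a u' ∈ G := ctr_mem a u'
      set v₀ := castR (a e₀) with hv₀
      have hctr_pin : ctr a u' = ∑ f, (if f = e₀ then (1:ℝ) else ((u f : ℝ))) • castR (a f) := by
        unfold ctr
        refine Finset.sum_congr rfl fun f _ => ?_
        rcases eq_or_ne f e₀ with rfl | hne
        · rw [if_pos rfl, hu'e₀, SignType.coe_one]
        · rw [if_neg hne, hu', Function.update_of_ne hne]
      set xm : ℕ → Fin n → ℝ :=
        fun m => ∑ f, (if f = e₀ then (1 - 1/((m:ℝ)+1)) else ((u f : ℝ))) • castR (a f)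
        with hxmdef
      have hIcc : ∀ m : ℕ, (1 - 1/((m:ℝ)+1)) ∈ Set.Icc (-1:ℝ) 1 := by
        intro m
        have hm1 : (0:ℝ) < (m:ℝ) + 1 := by positivity
        have h2 : 1/((m:ℝ)+1) ≤ 1 := by
          rw [div_le_one hm1]
          have := Nat.cast_nonneg (α := ℝ) m
          linarith
        have h3 : 0 < 1/((m:ℝ)+1) := by positivity
        simp only [Set.mem_Icc]
        constructor <;> linarith
      have hxmP : ∀ m : ℕ, xm m ∈ P := fun m => ⟨_, adapted_pin u e₀ hu0 (hIcc m), rfl⟩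
      have hxm_sub : ∀ m : ℕ, ctr a u' - xm m = (1/((m:ℝ)+1)) • v₀ := by
        intro m
        rw [hctr_pin, hxmdef]
        rw [← Finset.sum_sub_distrib, Finset.sum_eq_single e₀]
        · rw [if_pos rfl, if_pos rfl, ← sub_smul]
          have h4 : (1:ℝ) - (1 - 1/((m:ℝ)+1)) = 1/((m:ℝ)+1) := by ring
          rw [h4, hv₀]
        · intro b _ hb
          rw [if_neg hb, if_neg hb, sub_self]
        · intro h; exact absurd (Finset.mem_univ e₀) h
      have hchoice : ∀ m : ℕ, ∃ F, F ∈ T ∧ xm m ∈ F := by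
        intro m
        have := hxmP m
        rw [← hT.2.1] at this
        obtain ⟨F, hF, hxF⟩ := this
        exact ⟨F, hF, hxF⟩
      choose Fm hFmT hFmx using hchoice
      have hTfin : T.Finite := tiling_finite hT
      have hmemF : ∀ m, Fm m ∈ hTfin.toFinset := fun m => hTfin.mem_toFinset.2 (hFmT m)
      obtain ⟨y, hy⟩ := Finite.exists_infinite_fiber
        (fun m : ℕ => (⟨Fm m, hmemF m⟩ : {F // F ∈ hTfin.toFinset}))
      have hyT : y.1 ∈ T := hTfin.mem_toFinset.1 y.2
      have hS : {m : ℕ | Fm m = y.1}.Infinite := by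
        have h1 := Set.infinite_coe_iff.1 hy
        refine h1.mono ?_
        intro m hm
        simp only [Set.mem_preimage, Set.mem_singleton_iff] at hm
        exact congrArg Subtype.val hm
      have hclosed : IsClosed y.1 := isClosed_of_integral (hT.1 _ hyT)
      have hpF : ctr a u' ∈ y.1 := by
        rw [← hclosed.closure_eq, Metric.mem_closure_iff]
        intro ε hε
        obtain ⟨m, hmS, hm⟩ := hS.exists_gt (Nat.ceil (‖v₀‖ / ε))
        refine ⟨xm m, ?_, ?_⟩
        · rw [← hmS]
          exact hFmx m
        · rw [dist_eq_norm, hxm_sub m, norm_smul]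
          simp only [Real.norm_eq_abs]
          have hm1 : (0:ℝ) < (m:ℝ) + 1 := by positivity
          rw [abs_of_pos (by positivity : (0:ℝ) < 1/((m:ℝ)+1))]
          rw [div_mul_eq_mul_div, one_mul, div_lt_iff₀ hm1]
          have hceil : ‖v₀‖ / ε ≤ (Nat.ceil (‖v₀‖/ε) : ℝ) := Nat.le_ceil _
          have hmc : ((Nat.ceil (‖v₀‖/ε) : ℕ) : ℝ) < (m:ℝ) := by exact_mod_cast hm
          have hlt : ‖v₀‖ / ε < (m:ℝ) := lt_of_le_of_lt hceil hmc
          have := (div_lt_iff₀ hε).1 hlt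
          nlinarith
      have hGsub : G ⊆ y.1 := by
        have hne : (y.1 ∩ G).Nonempty := ⟨ctr a u', hpF, hpG⟩
        have hface := (hT.2.2.2 y.1 hyT G hGT hne).2
        have heq := face_eq_of_center_mem (zs_symm a u') hface ⟨hpF, hpG⟩
        rw [hG, ← heq]
        exact Set.inter_subset_left
      rcases dichotomy hB hprim hu0 (hT.1 _ hyT) (hsub _ hyT) hGsub with hcase | hcase
      · exfalso
        obtain ⟨m, hmS⟩ := hS.nonempty
        have hxmy : xm m ∈ y.1 := by rw [← hmS]; exact hFmx m
        rw [hcase] at hxmy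
        have h1 : B.repr (xm m) e₀ = 1 := ((mem_update_one_iff hB hu0 _).1 hxmy).2
        have h2 : B.repr (xm m) e₀ = 1 - 1/((m:ℝ)+1) := by
          rw [hxmdef]
          rw [repr_sum hB]
          simp
        rw [h2] at h1
        have h3 : (0:ℝ) < 1/((m:ℝ)+1) := by positivity
        linarith
      · rw [hP, ← hcase]
        exact hyT
    · push_neg at h0
      have hsingle : zonotopeSigned a u = {ctr a u} := by
        refine Set.Subset.antisymm ?_ ?_
        · rintro x ⟨t, ht, rfl⟩
          have hte : ∀ e, t e = ((u e : ℝ)) := by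
            intro e
            cases hc : u e with
            | zero => exact absurd hc (h0 e)
            | pos => rw [ht.2.1 e hc, SignType.pos_eq_one, SignType.coe_one]
            | neg => rw [ht.2.2 e hc, SignType.neg_eq_neg_one, SignType.coe_neg_one]
          have hx : ∑ e, t e • castR (a e) = ctr a u := by
            unfold ctr
            exact Finset.sum_congr rfl fun e _ => by rw [hte e]
          rw [hx]
          exact Set.mem_singleton _
        · intro x hx
          rw [Set.mem_singleton_iff] at hx
          rw [hx]
          exact ctr_mem a u
      have hctrU : ctr a u ∈ ⋃₀ T := by
        rw [hT.2.1, hsingle]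
        exact Set.mem_singleton _
      obtain ⟨F, hF, hxF⟩ := hctrU
      have hFsub : F ⊆ {ctr a u} := by
        rw [← hsingle, ← hT.2.1]
        exact Set.subset_sUnion_of_mem hF
      have hFeq : F = zonotopeSigned a u := by
        rw [hsingle]
        exact Set.Subset.antisymm hFsub (Set.singleton_subset_iff.2 hxF)
      rw [← hFeq]
      exact hF

end Main

/-- If `Z(a)` is a parallelotope (the `a_e` are primitive and form a basis of
`N_ℝ`), then the only tiling of `Z(a)` by integral zonotopes is the trivial tiling
consisting of `Z(a)` and its faces. -/
theorem statement3 {n : ℕ} (a : Fin n → Fin n → ℤ)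
    (hprim : ∀ e, IsPrimitive (a e))
    (hindep : LinearIndependent ℝ fun e => castR (a e))
    (hspan : Submodule.span ℝ (Set.range fun e => castR (a e)) = ⊤)
    (T : Set (Set (Fin n → ℝ))) (hT : IsTiling T (zonotope a)) :
    T = {F | IsFaceOf F (zonotope a)} := by
  classical
  have hsp : ⊤ ≤ Submodule.span ℝ (Set.range fun e => castR (a e)) := le_of_eq hspan.symm
  have hB : ∀ e, (Module.Basis.mk hindep hsp) e = castR (a e) := fun e => Module.Basis.mk_apply hindep hsp e
  have hZT : zonotope a ∈ T :=
    tiling_self_mem hB hprim _ (0 : Fin n → SignType) rfl T hT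
  ext F
  simp only [Set.mem_setOf_eq]
  constructor
  · intro hF
    have hFP : F ⊆ zonotope a := by
      rw [← hT.2.1]
      exact Set.subset_sUnion_of_mem hF
    have hne : F.Nonempty := by
      obtain ⟨η, hη, -⟩ := integralZonotope_center (hT.1 F hF)
      exact ⟨castR η, hη⟩
    have hinter : (F ∩ zonotope a).Nonempty := by
      rw [Set.inter_eq_self_of_subset_left hFP]
      exact hne
    have h4 := (hT.2.2.2 F hF _ hZT hinter).2
    rwa [Set.inter_eq_self_of_subset_left hFP] at h4
  · intro hF
    exact hT.2.2.1 _ hZT F hF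

end Hypertoric
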